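/- Let $T \ge 1$, $L_{\max} > 0$, $c > 0$, and $\alpha \in [0, L_{\max}]$. For each $1 \le t \le T$ let $\ell_t : \mathbb{R} \to \mathbb{R}$ be a nonincreasing function with $0 \le \ell_t(\lambda) \le L_{\max}$ for all $\lambda$, $\ell_t(\lambda) = L_{\max}$ for $\lambda \le 0$, and $\ell_t(\lambda) = 0$ for $\lambda \ge c$. Let $(\eta_t)_{t=1}^T$ be positive and nonincreasing, and let the thresholds evolve as $\lambda_{t+1} = \lambda_t + \eta_t (\ell_t(\lambda_t) - \alpha)$ with $\lambda_1 \in [-\eta_1 \alpha,\; c + \eta_1(L_{\max} - \alpha)]$. Then the time-averaged incurred loss $\bar{L}(T) = \frac{1}{T} \sum_{t=1}^T \ell_t(\lambda_t)$ satisfies $\left| \bar{L}(T) - \alpha \right| \le \frac{2 (c + \eta_1 L_{\max})}{T \eta_T}$. -/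

import Mathlib

/-- Long-term loss control for a saturating monotone loss family with
nonincreasing step sizes: the time-averaged incurred loss is within
`2(c + η_1 L_max)/(T η_T)` of the target `α`. -/
theorem long_term_loss_control_saturating
    (T : ℕ) (hT : 1 ≤ T)
    (Lmax : ℝ) (hLmax : 0 < Lmax) (c : ℝ) (hc : 0 < c)
    (α : ℝ) (hα : 0 ≤ α ∧ α ≤ Lmax)
    (ℓ : ℕ → ℝ → ℝ)
    (hmono : ∀ t, 1 ≤ t → t ≤ T → ∀ x y : ℝ, x ≤ y → ℓ t y ≤ ℓ t x)
    (hbdd : ∀ t, 1 ≤ t → t ≤ T → ∀ x : ℝ, 0 ≤ ℓ t x ∧ ℓ t x ≤ Lmax)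
    (hsat0 : ∀ t, 1 ≤ t → t ≤ T → ∀ x : ℝ, x ≤ 0 → ℓ t x = Lmax)
    (hsatc : ∀ t, 1 ≤ t → t ≤ T → ∀ x : ℝ, c ≤ x → ℓ t x = 0)
    (η lam : ℕ → ℝ)
    (hη : ∀ t, 1 ≤ t → t ≤ T → 0 < η t)
    (hηmono : ∀ t, 1 ≤ t → t ≤ T - 1 → η (t + 1) ≤ η t)
    (hupd : ∀ t, 1 ≤ t → t ≤ T →
      lam (t + 1) = lam t + η t * (ℓ t (lam t) - α))
    (hinit : lam 1 ∈ Set.Icc (-(η 1 * α)) (c + η 1 * (Lmax - α))) :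
    |(1 / (T : ℝ)) * ∑ t ∈ Finset.Icc 1 T, ℓ t (lam t) - α|
      ≤ 2 * (c + η 1 * Lmax) / (T * η T) := by
  obtain ⟨hα0, hαL⟩ := hα
  have hη1 : 0 < η 1 := hη 1 le_rfl hT
  set D : ℝ := c + η 1 * Lmax with hD
  have hDpos : 0 < D := by positivity
  -- η n ≤ η 1 for 1 ≤ n ≤ T
  have hle1 : ∀ n, 1 ≤ n → n ≤ T → η n ≤ η 1 := by
    intro n h1 h2
    induction n with
    | zero => omega
    | succ m ih =>
      rcases Nat.eq_or_lt_of_le h1 with h | h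
      · simp [← h]
      · have hm1 : 1 ≤ m := by omega
        have hmT : m ≤ T - 1 := by omega
        exact le_trans (hηmono m hm1 hmT) (ih hm1 (by omega))
  -- invariant
  have key : ∀ n, 1 ≤ n → n ≤ T + 1 →
      lam n ∈ Set.Icc (-(η 1 * α)) (c + η 1 * (Lmax - α)) := by
    intro n h1 h2
    induction n with
    | zero => omega
    | succ m ih =>
      rcases Nat.eq_or_lt_of_le h1 with h | h
      · rw [← h]; exact hinit
      · have hm1 : 1 ≤ m := by omega
        have hmT : m ≤ T := by omega
        obtain ⟨ihl, ihu⟩ := ih hm1 (by omega)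
        have hηm := hη m hm1 hmT
        have hηm1 := hle1 m hm1 hmT
        have hu := hupd m hm1 hmT
        obtain ⟨hl0, hlL⟩ := hbdd m hm1 hmT (lam m)
        constructor
        · by_cases hcase : lam m ≤ 0
          · have := hsat0 m hm1 hmT (lam m) hcase
            rw [hu, this]
            nlinarith
          · push_neg at hcase
            rw [hu]
            nlinarith
        · by_cases hcase : c ≤ lam m
          · have := hsatc m hm1 hmT (lam m) hcase
            rw [hu, this]
            nlinarith
          · push_neg at hcase
            rw [hu]
            nlinarith
  have habs : ∀ n, 1 ≤ n → n ≤ T + 1 → |lam n| ≤ D := by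
    intro n h1 h2
    obtain ⟨hl, hu⟩ := key n h1 h2
    rw [abs_le]
    constructor
    · nlinarith
    · nlinarith
  -- Abel-type bound
  have abel : ∀ n, 1 ≤ n → n ≤ T →
      |(∑ t ∈ Finset.Icc 1 n, (lam (t + 1) - lam t) / η t) - lam (n + 1) / η n|
        ≤ D / η n := by
    intro n h1 h2
    induction n with
    | zero => omega
    | succ m ih =>
      rcases Nat.eq_or_lt_of_le h1 with h | h
      · rw [← h]
        simp only [Finset.Icc_self, Finset.sum_singleton]
        have : (lam (1 + 1) - lam 1) / η 1 - lam (1 + 1) / η 1 = -(lam 1 / η 1) := by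
          ring
        rw [this, abs_neg, abs_div, abs_of_pos hη1]
        gcongr
        exact habs 1 le_rfl (by omega)
      · have hm1 : 1 ≤ m := by omega
        have hmT : m ≤ T := by omega
        have hηm := hη m hm1 hmT
        have hηm1 := hη (m + 1) (by omega) h2
        have hmono' : η (m + 1) ≤ η m := hηmono m hm1 (by omega)
        have ihm := ih hm1 hmT
        rw [Finset.sum_Icc_succ_top (by omega : 1 ≤ m + 1)]
        have heq : (∑ t ∈ Finset.Icc 1 m, (lam (t + 1) - lam t) / η t)
            + (lam (m + 1 + 1) - lam (m + 1)) / η (m + 1) - lam (m + 1 + 1) / η (m + 1)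
            = ((∑ t ∈ Finset.Icc 1 m, (lam (t + 1) - lam t) / η t) - lam (m + 1) / η m)
              + lam (m + 1) * (1 / η m - 1 / η (m + 1)) := by
          field_simp
          ring
        rw [heq]
        have hlam := habs (m + 1) (by omega) (by omega)
        have hstep : |lam (m + 1) * (1 / η m - 1 / η (m + 1))|
            ≤ D * (1 / η (m + 1) - 1 / η m) := by
          rw [abs_mul]
          have h1' : |1 / η m - 1 / η (m + 1)| = 1 / η (m + 1) - 1 / η m := by
            rw [abs_sub_comm, abs_of_nonneg]
            have : 1 / η m ≤ 1 / η (m + 1) := one_div_le_one_div_of_le hηm1 hmono'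
            linarith
          rw [h1']
          have : 1 / η m ≤ 1 / η (m + 1) := one_div_le_one_div_of_le hηm1 hmono'
          exact mul_le_mul_of_nonneg_right hlam (by linarith)
        calc _ ≤ |(∑ t ∈ Finset.Icc 1 m, (lam (t + 1) - lam t) / η t) - lam (m + 1) / η m|
                + |lam (m + 1) * (1 / η m - 1 / η (m + 1))| := abs_add_le _ _
          _ ≤ D / η m + D * (1 / η (m + 1) - 1 / η m) := add_le_add ihm hstep
          _ = D / η (m + 1) := by field_simp; ring
  -- rewrite the loss sum
  have hsum : (∑ t ∈ Finset.Icc 1 T, ℓ t (lam t))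
      = (∑ t ∈ Finset.Icc 1 T, (lam (t + 1) - lam t) / η t) + T * α := by
    have hterm : ∀ t ∈ Finset.Icc 1 T,
        ℓ t (lam t) = (lam (t + 1) - lam t) / η t + α := by
      intro t ht
      rw [Finset.mem_Icc] at ht
      have hηt := hη t ht.1 ht.2
      rw [hupd t ht.1 ht.2]
      field_simp
      ring
    rw [Finset.sum_congr rfl hterm, Finset.sum_add_distrib]
    simp [Nat.card_Icc]
  have hTpos : (0 : ℝ) < T := by exact_mod_cast hT
  have hηT := hη T hT le_rfl
  set S : ℝ := ∑ t ∈ Finset.Icc 1 T, (lam (t + 1) - lam t) / η t with hS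
  have hSbound : |S| ≤ 2 * D / η T := by
    have h1 := abel T hT le_rfl
    have h2 : |lam (T + 1) / η T| ≤ D / η T := by
      rw [abs_div, abs_of_pos hηT]
      gcongr
      exact habs (T + 1) (by omega) le_rfl
    calc |S| = |(S - lam (T + 1) / η T) + lam (T + 1) / η T| := by congr 1; ring
      _ ≤ |S - lam (T + 1) / η T| + |lam (T + 1) / η T| := abs_add_le _ _
      _ ≤ D / η T + D / η T := add_le_add h1 h2
      _ = 2 * D / η T := by ring
  have hexpr : (1 / (T : ℝ)) * ∑ t ∈ Finset.Icc 1 T, ℓ t (lam t) - α = S / T := by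
    rw [hsum]
    field_simp
    ring
  rw [hexpr]
  rw [abs_div, abs_of_pos hTpos, div_le_div_iff₀ hTpos (by positivity)]
  calc |S| * (T * η T) = (|S| * η T) * T := by ring
    _ ≤ (2 * D / η T * η T) * T := by
        apply mul_le_mul_of_nonneg_right _ hTpos.le
        exact mul_le_mul_of_nonneg_right hSbound hηT.le
    _ = 2 * D * T := by field_simp
    _ = 2 * (c + η 1 * Lmax) * T := by rw [hD]
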